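/- Let the nonlinear system x_{k+1} = f(x_k, u_k), y_k = g(x_k, u_k) admit a Koopman linear embedding (Φ, A, B, C, D) of dimension n_z. Let L = T_ini + N with T_ini ≥ n_z, and suppose l ≥ mL + n_z length-L trajectories of the nonlinear system, with initial states x₀^i, provide lifted excitation of order L; let H_d = col(U_P, U_F, Y_P, Y_F) be the corresponding trajectory library, where U_P, Y_P consist of the first T_ini block-rows and U_F, Y_F of the last N block-rows of the stacked input and output data. Let (u_ini, y_ini) be a length-T_ini input-output trajectory of the nonlinear system. Then for any future input u_F ∈ ℝ^{mN} and any y_F ∈ ℝ^{pN}, the concatenated sequence col(u_ini, u_F) with output col(y_ini, y_F) is a valid length-L trajectory of the nonlinear system if and only if there exists g ∈ ℝ^l such that U_P g = u_ini, Y_P g = y_ini, U_F g = u_F and Y_F g = y_F. -/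

import Mathlib

/-!
STATEMENT 5 (Theorem 3): Data-driven representation for nonlinear systems with a Koopman
linear embedding. With L = T_ini + N, T_ini ≥ n_z, a trajectory library of l ≥ mL + n_z
length-L trajectories providing lifted excitation of order L, and (u_ini, y_ini) a
length-T_ini trajectory of the nonlinear system: for any future input u_F and any y_F,
col(u_ini, u_F) with output col(y_ini, y_F) is a valid length-L trajectory of the
nonlinear system iff ∃ g with U_P g = u_ini, Y_P g = y_ini, U_F g = u_F, Y_F g = y_F.
-/

lemma aux_surj {I J : Type*} [Fintype I] [Fintype J] [DecidableEq I] (M : Matrix I J ℝ)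
    (h : M.rank = Fintype.card I) (v : I → ℝ) : ∃ g, M.mulVec g = v := by
  have hr : LinearMap.range M.mulVecLin = ⊤ := by
    apply Submodule.eq_top_of_finrank_eq
    rw [← Matrix.rank, h, Module.finrank_fintype_fun_eq_card]
  exact (LinearMap.range_eq_top.mp hr) v

lemma aux_swap {l q r : ℕ} (M : Matrix (Fin q) (Fin r) ℝ) (gc : Fin l → ℝ)
    (v : Fin l → Fin r → ℝ) (a : Fin q) :
    ∑ i, gc i * M.mulVec (v i) a = M.mulVec (fun b => ∑ i, gc i * v i b) a := by
  simp only [Matrix.mulVec, dotProduct, Finset.mul_sum]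
  rw [Finset.sum_comm]
  exact Finset.sum_congr rfl fun b _ => Finset.sum_congr rfl fun i _ => by ring

lemma aux_sum_mulVec {I : Type*} [DecidableEq I] {q r : ℕ} (s : Finset I)
    (M : I → Matrix (Fin q) (Fin r) ℝ) (v : Fin r → ℝ) :
    (∑ i ∈ s, M i).mulVec v = ∑ i ∈ s, (M i).mulVec v := by
  induction s using Finset.induction with
  | empty => simp [Matrix.mulVec, dotProduct]
  | insert a s h ih => simp [Finset.sum_insert h, Matrix.add_mulVec, ih]

open Finset Polynomial in
lemma aux_ch {nz p : ℕ} (A : Matrix (Fin nz) (Fin nz) ℝ) (C : Matrix (Fin p) (Fin nz) ℝ)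
    (δ : Fin nz → ℝ) (h : ∀ j < nz, C.mulVec ((A ^ j).mulVec δ) = 0) :
    ∀ j, C.mulVec ((A ^ j).mulVec δ) = 0 := by
  have hdeg : A.charpoly.natDegree = nz := by
    rw [Matrix.charpoly_natDegree_eq_dim, Fintype.card_fin]
  have hch := Matrix.aeval_self_charpoly A
  rw [Polynomial.aeval_eq_sum_range, hdeg, Finset.sum_range_succ] at hch
  have hmon : A.charpoly.coeff nz = 1 := by
    have := (Matrix.charpoly_monic A).coeff_natDegree
    rwa [hdeg] at this
  rw [hmon, one_smul] at hch
  have hpow : A ^ nz = -∑ i ∈ Finset.range nz, A.charpoly.coeff i • A ^ i :=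
    eq_neg_of_add_eq_zero_right hch
  intro j
  induction j using Nat.strong_induction_on with
  | _ j ih =>
    rcases lt_or_ge j nz with hj | hj
    · exact h j hj
    · have h1 : A ^ j = (A ^ nz) * (A ^ (j - nz)) := by
        rw [← pow_add]; congr 1; omega
      have hM : (A ^ nz) * (A ^ (j - nz))
          = -∑ i ∈ Finset.range nz, A.charpoly.coeff i • A ^ (i + (j - nz)) := by
        rw [hpow, neg_mul, Finset.sum_mul]
        congr 1
        exact Finset.sum_congr rfl fun i _ => by rw [smul_mul_assoc, ← pow_add]
      rw [h1, hM, Matrix.neg_mulVec]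
      have hsum : ((∑ i ∈ Finset.range nz, A.charpoly.coeff i • A ^ (i + (j - nz))).mulVec δ)
          = ∑ i ∈ Finset.range nz, A.charpoly.coeff i • ((A ^ (i + (j - nz))).mulVec δ) := by
        rw [aux_sum_mulVec]
        exact Finset.sum_congr rfl fun i _ => by rw [Matrix.smul_mulVec]
      rw [hsum]
      have hlin : ∀ w : Fin nz → ℝ, C.mulVec w = C.mulVecLin w := fun _ => rfl
      rw [hlin, map_neg, map_sum]
      have hz : ∀ i ∈ Finset.range nz,
          C.mulVecLin (A.charpoly.coeff i • ((A ^ (i + (j - nz))).mulVec δ)) = 0 := by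
        intro i hi
        rw [map_smul, ← hlin, ih (i + (j - nz)) (by simp at hi; omega)]
        simp
      rw [Finset.sum_congr rfl hz]
      simp

theorem data_driven_representation_koopman
    (n m p nz Tini N l : ℕ) (hTini : nz ≤ Tini)
    (f : (Fin n → ℝ) → (Fin m → ℝ) → (Fin n → ℝ))
    (g : (Fin n → ℝ) → (Fin m → ℝ) → (Fin p → ℝ))
    (Φ : (Fin n → ℝ) → (Fin nz → ℝ))
    (A : Matrix (Fin nz) (Fin nz) ℝ) (B : Matrix (Fin nz) (Fin m) ℝ)
    (C : Matrix (Fin p) (Fin nz) ℝ) (D : Matrix (Fin p) (Fin m) ℝ)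
    -- (Φ, A, B, C, D) is a Koopman linear embedding of the nonlinear system (f, g):
    (hdyn : ∀ x u, Φ (f x u) = A.mulVec (Φ x) + B.mulVec u)
    (hout : ∀ x u, g x u = C.mulVec (Φ x) + D.mulVec u)
    -- the data: l ≥ mL + n_z length-L trajectories (L = T_ini + N) with initial states x₀^i:
    (hl : m * (Tini + N) + nz ≤ l)
    (ud : Fin l → ℕ → Fin m → ℝ) (yd : Fin l → ℕ → Fin p → ℝ)
    (x₀ : Fin l → Fin n → ℝ)
    (hdata : ∀ i : Fin l, ∃ x : ℕ → (Fin n → ℝ), x 0 = x₀ i ∧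
      ∀ k < Tini + N, x (k + 1) = f (x k) (ud i k) ∧ yd i k = g (x k) (ud i k))
    -- lifted excitation of order L = T_ini + N:
    (hHK : (Matrix.of fun (r : (Fin (Tini + N) × Fin m) ⊕ Fin nz) (i : Fin l) =>
        Sum.elim (fun ka : Fin (Tini + N) × Fin m => ud i (ka.1 : ℕ) ka.2)
          (fun a : Fin nz => Φ (x₀ i) a) r).rank
      = Fintype.card ((Fin (Tini + N) × Fin m) ⊕ Fin nz))
    -- (u_ini, y_ini) is a length-T_ini input-output trajectory of the nonlinear system:
    (uini : ℕ → Fin m → ℝ) (yini : ℕ → Fin p → ℝ)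
    (hini : ∃ x : ℕ → (Fin n → ℝ),
      ∀ k < Tini, x (k + 1) = f (x k) (uini k) ∧ yini k = g (x k) (uini k))
    -- any future input u_F and any y_F:
    (uF : ℕ → Fin m → ℝ) (yF : ℕ → Fin p → ℝ) :
    -- the concatenated input-output sequence is a valid length-L trajectory of the
    -- nonlinear system iff ∃ g with U_P g = u_ini, Y_P g = y_ini, U_F g = u_F, Y_F g = y_F:
    (∃ x : ℕ → (Fin n → ℝ),
      ∀ k < Tini + N,
        x (k + 1) = f (x k) (if k < Tini then uini k else uF (k - Tini)) ∧
        (if k < Tini then yini k else yF (k - Tini))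
          = g (x k) (if k < Tini then uini k else uF (k - Tini))) ↔
    (∃ gc : Fin l → ℝ,
      (∀ k < Tini, ∀ a : Fin m, ∑ i : Fin l, ud i k a * gc i = uini k a) ∧
      (∀ k < Tini, ∀ b : Fin p, ∑ i : Fin l, yd i k b * gc i = yini k b) ∧
      (∀ k < N, ∀ a : Fin m, ∑ i : Fin l, ud i (Tini + k) a * gc i = uF k a) ∧
      (∀ k < N, ∀ b : Fin p, ∑ i : Fin l, yd i (Tini + k) b * gc i = yF k b)) := by
  -- the combined input and output sequences
  set u : ℕ → Fin m → ℝ := fun k => if k < Tini then uini k else uF (k - Tini) with hu_def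
  set y : ℕ → Fin p → ℝ := fun k => if k < Tini then yini k else yF (k - Tini) with hy_def
  -- choose the data state trajectories
  choose xs hxs0 hxsrec using hdata
  constructor
  · rintro ⟨x, hx⟩
    obtain ⟨gc, hgc⟩ := aux_surj _ hHK
      (Sum.elim (fun ka : Fin (Tini + N) × Fin m => u (ka.1 : ℕ) ka.2)
        (fun a : Fin nz => Φ (x 0) a))
    -- input matching
    have hU : ∀ k, (hk : k < Tini + N) → ∀ a : Fin m,
        ∑ i : Fin l, ud i k a * gc i = u k a := by
      intro k hk a
      have := congrFun hgc (Sum.inl (⟨k, hk⟩, a))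
      simpa [Matrix.mulVec, dotProduct] using this
    have hz0 : ∀ a : Fin nz, ∑ i : Fin l, gc i * Φ (xs i 0) a = Φ (x 0) a := by
      intro a
      have := congrFun hgc (Sum.inr a)
      simp only [Matrix.mulVec, dotProduct, Matrix.of_apply, Sum.elim_inr] at this
      rw [← this]
      exact Finset.sum_congr rfl fun i _ => by rw [hxs0 i, mul_comm]
    -- lifted states match: z k = Φ (x k)
    have hz : ∀ k, k ≤ Tini + N → ∀ a : Fin nz,
        ∑ i : Fin l, gc i * Φ (xs i k) a = Φ (x k) a := by
      intro k
      induction k with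
      | zero => intro _ a; exact hz0 a
      | succ k ih =>
        intro hk a
        have hk' : k < Tini + N := by omega
        have ihk := ih (by omega)
        calc ∑ i : Fin l, gc i * Φ (xs i (k + 1)) a
            = ∑ i : Fin l, gc i * (A.mulVec (Φ (xs i k)) + B.mulVec (ud i k)) a := by
              exact Finset.sum_congr rfl fun i _ => by
                rw [(hxsrec i k hk').1, hdyn]
          _ = ∑ i : Fin l, gc i * A.mulVec (Φ (xs i k)) a
              + ∑ i : Fin l, gc i * B.mulVec (ud i k) a := by
              rw [← Finset.sum_add_distrib]
              exact Finset.sum_congr rfl fun i _ => by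
                simp [Pi.add_apply, mul_add]
          _ = A.mulVec (Φ (x k)) a + B.mulVec (u k) a := by
              rw [aux_swap, aux_swap]
              congr 1
              · congr 1; funext b; exact ihk b
              · congr 1; funext b
                rw [← hU k hk' b]
                exact Finset.sum_congr rfl fun i _ => by rw [mul_comm]
          _ = Φ (x (k + 1)) a := by
              rw [(hx k hk').1, hdyn]; rfl
    -- output matching
    have hY : ∀ k, (hk : k < Tini + N) → ∀ b : Fin p,
        ∑ i : Fin l, yd i k b * gc i = y k b := by
      intro k hk b
      calc ∑ i : Fin l, yd i k b * gc i
          = ∑ i : Fin l, gc i * (C.mulVec (Φ (xs i k)) + D.mulVec (ud i k)) b := by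
            exact Finset.sum_congr rfl fun i _ => by
              rw [(hxsrec i k hk).2, hout, mul_comm]
        _ = ∑ i : Fin l, gc i * C.mulVec (Φ (xs i k)) b
            + ∑ i : Fin l, gc i * D.mulVec (ud i k) b := by
            rw [← Finset.sum_add_distrib]
            exact Finset.sum_congr rfl fun i _ => by simp [Pi.add_apply, mul_add]
        _ = C.mulVec (Φ (x k)) b + D.mulVec (u k) b := by
            rw [aux_swap, aux_swap]
            congr 1
            · congr 1; funext c; exact hz k (le_of_lt hk) c
            · congr 1; funext c
              rw [← hU k hk c]
              exact Finset.sum_congr rfl fun i _ => by rw [mul_comm]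
        _ = y k b := by
            rw [← Pi.add_apply, ← hout, ← (hx k hk).2]
    refine ⟨gc, ?_, ?_, ?_, ?_⟩
    · intro k hk a
      have := hU k (by omega) a
      simpa [hu_def, if_pos hk] using this
    · intro k hk b
      have := hY k (by omega) b
      simpa [hy_def, if_pos hk] using this
    · intro k hk a
      have := hU (Tini + k) (by omega) a
      simpa [hu_def, Nat.add_sub_cancel_left] using this
    · intro k hk b
      have := hY (Tini + k) (by omega) b
      simpa [hy_def, Nat.add_sub_cancel_left] using this
  · rintro ⟨gc, hUP, hYP, hUF, hYF⟩
    obtain ⟨xb, hxb⟩ := hini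
    -- combined input/output matching from the four conditions
    have hu : ∀ k < Tini + N, ∀ a : Fin m, ∑ i : Fin l, gc i * ud i k a = u k a := by
      intro k hk a
      rcases lt_or_ge k Tini with h | h
      · rw [Finset.sum_congr rfl fun i _ => mul_comm (gc i) _, hUP k h a]
        simp [hu_def, if_pos h]
      · have := hUF (k - Tini) (by omega) a
        rw [show Tini + (k - Tini) = k by omega] at this
        rw [Finset.sum_congr rfl fun i _ => mul_comm (gc i) _, this]
        simp [hu_def, if_neg (not_lt.mpr h)]
    have hy : ∀ k < Tini + N, ∀ b : Fin p, ∑ i : Fin l, gc i * yd i k b = y k b := by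
      intro k hk b
      rcases lt_or_ge k Tini with h | h
      · rw [Finset.sum_congr rfl fun i _ => mul_comm (gc i) _, hYP k h b]
        simp [hy_def, if_pos h]
      · have := hYF (k - Tini) (by omega) b
        rw [show Tini + (k - Tini) = k by omega] at this
        rw [Finset.sum_congr rfl fun i _ => mul_comm (gc i) _, this]
        simp [hy_def, if_neg (not_lt.mpr h)]
    -- the candidate nonlinear state trajectory
    let X : ℕ → Fin n → ℝ := fun k => Nat.rec (xb 0) (fun k xk => f xk (u k)) k
    have hXstep : ∀ k, X (k + 1) = f (X k) (u k) := fun k => rfl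
    have hX : ∀ k, k ≤ Tini → X k = xb k := by
      intro k
      induction k with
      | zero => intro _; rfl
      | succ k ih =>
        intro hk
        have hk' : k < Tini := by omega
        rw [hXstep, ih (by omega)]
        have : u k = uini k := by simp [hu_def, if_pos hk']
        rw [this]
        exact ((hxb k hk').1).symm
    -- lifted combined state z
    set z : ℕ → Fin nz → ℝ := fun k a => ∑ i : Fin l, gc i * Φ (xs i k) a with hz_def
    have hzstep : ∀ k < Tini + N, z (k + 1) = A.mulVec (z k) + B.mulVec (u k) := by
      intro k hk
      funext a
      calc z (k + 1) a
          = ∑ i : Fin l, gc i * (A.mulVec (Φ (xs i k)) + B.mulVec (ud i k)) a := by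
            exact Finset.sum_congr rfl fun i _ => by rw [(hxsrec i k hk).1, hdyn]
        _ = ∑ i : Fin l, gc i * A.mulVec (Φ (xs i k)) a
            + ∑ i : Fin l, gc i * B.mulVec (ud i k) a := by
            rw [← Finset.sum_add_distrib]
            exact Finset.sum_congr rfl fun i _ => by simp [Pi.add_apply, mul_add]
        _ = (A.mulVec (z k) + B.mulVec (u k)) a := by
            rw [aux_swap, aux_swap]
            congr 1
            congr 1
            funext b
            exact hu k hk b
    have hzout : ∀ k < Tini + N, y k = C.mulVec (z k) + D.mulVec (u k) := by
      intro k hk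
      funext b
      calc y k b
          = ∑ i : Fin l, gc i * yd i k b := (hy k hk b).symm
        _ = ∑ i : Fin l, gc i * (C.mulVec (Φ (xs i k)) + D.mulVec (ud i k)) b := by
            exact Finset.sum_congr rfl fun i _ => by rw [(hxsrec i k hk).2, hout]
        _ = ∑ i : Fin l, gc i * C.mulVec (Φ (xs i k)) b
            + ∑ i : Fin l, gc i * D.mulVec (ud i k) b := by
            rw [← Finset.sum_add_distrib]
            exact Finset.sum_congr rfl fun i _ => by simp [Pi.add_apply, mul_add]
        _ = (C.mulVec (z k) + D.mulVec (u k)) b := by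
            rw [aux_swap, aux_swap]
            congr 1
            congr 1
            funext c
            exact hu k hk c
    -- difference evolution
    have hδ : ∀ k, k ≤ Tini + N → z k - Φ (X k) = (A ^ k).mulVec (z 0 - Φ (X 0)) := by
      intro k
      induction k with
      | zero => intro _; rw [pow_zero, Matrix.one_mulVec]
      | succ k ih =>
        intro hk
        have hk' : k < Tini + N := by omega
        rw [hzstep k hk', hXstep, hdyn]
        have : A.mulVec (z k) + B.mulVec (u k) - (A.mulVec (Φ (X k)) + B.mulVec (u k))
            = A.mulVec (z k - Φ (X k)) := by
          rw [Matrix.mulVec_sub]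
          abel
        rw [this, ih (by omega), Matrix.mulVec_mulVec, ← pow_succ']
    -- unobservable direction killed on first Tini steps, hence always
    have hCδ : ∀ j, C.mulVec ((A ^ j).mulVec (z 0 - Φ (X 0))) = 0 := by
      apply aux_ch
      intro j hj
      have hjT : j < Tini := by omega
      have hjL : j < Tini + N := by omega
      have h1 : y j = C.mulVec (z j) + D.mulVec (u j) := hzout j hjL
      have h2 : y j = C.mulVec (Φ (X j)) + D.mulVec (u j) := by
        have hXj : X j = xb j := hX j (by omega)
        have huj : u j = uini j := by simp [hu_def, if_pos hjT]
        have hyj : y j = yini j := by simp [hy_def, if_pos hjT]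
        rw [hyj, (hxb j hjT).2, hout, hXj, huj]
      rw [← hδ j (by omega), Matrix.mulVec_sub]
      have := h1.symm.trans h2
      have h3 : C.mulVec (z j) = C.mulVec (Φ (X j)) := by
        have := add_right_cancel this
        exact this
      rw [h3, sub_self]
    have hCz : ∀ k, k ≤ Tini + N → C.mulVec (z k) = C.mulVec (Φ (X k)) := by
      intro k hk
      have := hCδ k
      rw [← hδ k hk, Matrix.mulVec_sub] at this
      exact sub_eq_zero.mp this
    refine ⟨X, fun k hk => ⟨hXstep k, ?_⟩⟩
    rcases lt_or_ge k Tini with h | h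
    · simp only [if_pos h]
      rw [(hxb k h).2, hX k (le_of_lt h)]
    · simp only [if_neg (not_lt.mpr h)]
      have h1 : y k = C.mulVec (z k) + D.mulVec (u k) := hzout k hk
      have h2 : g (X k) (u k) = C.mulVec (Φ (X k)) + D.mulVec (u k) := hout _ _
      have h3 : y k = g (X k) (u k) := by
        rw [h1, h2, hCz k (le_of_lt hk)]
      have hyk : y k = yF (k - Tini) := by simp [hy_def, if_neg (not_lt.mpr h)]
      have huk : u k = uF (k - Tini) := by simp [hu_def, if_neg (not_lt.mpr h)]
      rw [← hyk, ← huk]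
      exact h3
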